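/- If the sequent Γ, A∨B is minimal and the sequent Γ, A is valid, then Γ, A is minimal. -/

import Mathlib

/-- Propositional formulas in negation normal form. -/
inductive Fm : Type
  | pos : ℕ → Fm
  | neg : ℕ → Fm
  | conj : Fm → Fm → Fm
  | disj : Fm → Fm → Fm
  deriving DecidableEq

/-- Boolean evaluation of a formula under a valuation. -/
def Fm.eval (v : ℕ → Bool) : Fm → Bool
  | .pos p => v p
  | .neg p => !(v p)
  | .conj a b => a.eval v && b.eval v
  | .disj a b => a.eval v || b.eval v

/-- A sequent (nonempty multiset of formulas) is valid if under every
valuation some member is true (i.e. the disjunction is a tautology). -/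
def Valid (Γ : Multiset Fm) : Prop :=
  Γ ≠ 0 ∧ ∀ v : ℕ → Bool, ∃ A ∈ Γ, Fm.eval v A = true

/-- A sequent is minimal if it is valid and no proper sub-multiset is valid. -/
def MinimalSeq (Γ : Multiset Fm) : Prop :=
  Valid Γ ∧ ∀ Δ : Multiset Fm, Δ < Γ → ¬ Valid Δ

theorem stmt_4 (Γ : Multiset Fm) (A B : Fm)
    (hmin : MinimalSeq (Γ + {Fm.disj A B})) (hval : Valid (Γ + {A})) :
    MinimalSeq (Γ + {A}) := by
  refine ⟨hval, ?_⟩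
  intro Δ hΔ hΔv
  by_cases hA : A ∈ Δ
  · -- Δ = Δ.erase A + {A}, with Δ.erase A < Γ
    have hcount : ∀ x, Multiset.count x Δ ≤ Multiset.count x (Γ + {A}) :=
      fun x => Multiset.count_le_of_le x hΔ.le
    have herase : Δ.erase A ≤ Γ := by
      rw [Multiset.le_iff_count]
      intro x
      have := hcount x
      rw [Multiset.count_add, Multiset.count_singleton] at this
      by_cases hx : x = A
      · subst hx
        rw [Multiset.count_erase_self]
        simpa using this
      · rw [Multiset.count_erase_of_ne hx]
        simpa [hx] using this
    have hstrict : Δ.erase A < Γ := by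
      rcases lt_or_eq_of_le herase with h | h
      · exact h
      · exfalso
        have : Δ = Γ + {A} := by
          have := Multiset.cons_erase hA
          rw [← this, h, add_comm, Multiset.singleton_add]
        exact absurd this (ne_of_lt hΔ)
    have hlt : Δ.erase A + {Fm.disj A B} < Γ + {Fm.disj A B} :=
      add_lt_add_of_lt_of_le hstrict le_rfl
    apply hmin.2 _ hlt
    refine ⟨by simp, ?_⟩
    intro v
    by_cases hAv : Fm.eval v A = true
    · exact ⟨Fm.disj A B, by simp, by simp [Fm.eval, hAv]⟩
    · obtain ⟨C, hC, hCv⟩ := hΔv.2 v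
      have hCA : C ≠ A := fun h => hAv (h ▸ hCv)
      exact ⟨C, Multiset.mem_add.mpr (Or.inl ((Multiset.mem_erase_of_ne hCA).mpr hC)), hCv⟩
  · -- Δ ≤ Γ, so Δ < Γ + {disj A B}
    have hle : Δ ≤ Γ := by
      rw [Multiset.le_iff_count]
      intro x
      have := Multiset.count_le_of_le x hΔ.le
      rw [Multiset.count_add, Multiset.count_singleton] at this
      by_cases hx : x = A
      · subst hx
        simp [Multiset.count_eq_zero_of_notMem hA]
      · simpa [hx] using this
    have hlt : Δ < Γ + {Fm.disj A B} :=
      lt_of_le_of_lt hle (by rw [add_comm, Multiset.singleton_add]; exact Multiset.lt_cons_self _ _)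
    exact hmin.2 _ hlt hΔv
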